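/- Let (Ω, F, P) be a probability space, [a, b] ⊂ ℝ with a < b, B the Borel σ-algebra of [a, b], and μ a map assigning to each A ∈ B a real-valued random variable μ(A), such that the family { Σ_{k=1}^{n} c_k μ(A_k) : n ≥ 1, A_1, …, A_n ∈ B pairwise disjoint, |c_k| ≤ 1 } is bounded in probability, and such that the stochastic process μ(t) := μ([a, t]), a ≤ t ≤ b, has continuous paths almost surely and satisfies μ((s, t]) = μ(t) − μ(s) a.s. for a ≤ s ≤ t ≤ b. Then for every p ≥ 2 and 0 < α < 1/p, almost surely Σ_{n=1}^{∞} 2^{n(αp − 1)} Σ_{k=1}^{2^n} | μ(a + k·2^{−n}(b − a)) − μ(a + (k − 1)·2^{−n}(b − a)) |^p < ∞. -/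

import Mathlib

open MeasureTheory
open scoped Classical

noncomputable section StochasticMeasureAux

section SignLemmas
def sgR (b : Bool) : ℝ := if b then 1 else -1
lemma sgR_sq (b : Bool) : sgR b ^ 2 = 1 := by cases b <;> simp [sgR]
lemma sgR_not (b : Bool) : sgR (!b) = - sgR b := by cases b <;> simp [sgR]
lemma abs_sgR (b : Bool) : |sgR b| = 1 := by cases b <;> simp [sgR]
variable {ι : Type*} [Fintype ι] [DecidableEq ι]
lemma card_bool_fun : (Finset.univ : Finset (ι → Bool)).card = 2 ^ Fintype.card ι := by
  rw [Finset.card_univ, Fintype.card_fun, Fintype.card_bool]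
lemma sum_sgR_mul_eq_zero (j : ι) (F : (ι → Bool) → ℝ)
    (hF : ∀ c b, F (Function.update c j b) = F c) :
    ∑ c : ι → Bool, sgR (c j) * F c = 0 := by
  apply Finset.sum_ninvolution (g := fun c => Function.update c j (!(c j)))
  · intro c
    have h1 : (Function.update c j (!(c j))) j = !(c j) := Function.update_self _ _ _
    rw [h1, sgR_not, hF]; ring
  · intro c hc h
    apply hc
    have := congrFun h j
    rw [Function.update_self] at this
    simp at this
  · intro c; exact Finset.mem_univ _
  · intro c
    funext i
    by_cases hi : i = j
    · subst hi; simp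
    · simp [Function.update_of_ne hi]

lemma moment2 (x : ι → ℝ) (s : Finset ι) :
    ∑ c : ι → Bool, (∑ i ∈ s, x i * sgR (c i)) ^ 2
      = 2 ^ (Fintype.card ι) * ∑ i ∈ s, x i ^ 2 := by
  classical
  induction s using Finset.induction_on with
  | empty => simp
  | insert _ _ hj ih =>
    rename_i j s
    have key : ∀ c : ι → Bool,
        (∑ i ∈ insert j s, x i * sgR (c i)) ^ 2
          = (∑ i ∈ s, x i * sgR (c i)) ^ 2 + x j ^ 2
            + sgR (c j) * (2 * x j * ∑ i ∈ s, x i * sgR (c i)) := by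
      intro c
      rw [Finset.sum_insert hj]
      linear_combination (x j ^ 2) * sgR_sq (c j)
    simp_rw [key]
    rw [Finset.sum_add_distrib, Finset.sum_add_distrib, ih, Finset.sum_const,
      sum_sgR_mul_eq_zero j _ (fun c b => by
        have hs : (∑ i ∈ s, x i * sgR (Function.update c j b i))
            = ∑ i ∈ s, x i * sgR (c i) :=
          Finset.sum_congr rfl (fun i hi => by
            rw [Function.update_of_ne (ne_of_mem_of_not_mem hi hj)])
        rw [hs]),
      card_bool_fun, Finset.sum_insert hj]
    simp only [nsmul_eq_mul, add_zero]
    push_cast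
    ring

lemma moment4 (x : ι → ℝ) (s : Finset ι) :
    ∑ c : ι → Bool, (∑ i ∈ s, x i * sgR (c i)) ^ 4
      ≤ 3 * 2 ^ (Fintype.card ι) * (∑ i ∈ s, x i ^ 2) ^ 2 := by
  classical
  induction s using Finset.induction_on with
  | empty => simp
  | insert _ _ hj ih =>
    rename_i j s
    have key : ∀ c : ι → Bool,
        (∑ i ∈ insert j s, x i * sgR (c i)) ^ 4
          = (∑ i ∈ s, x i * sgR (c i)) ^ 4
            + 6 * x j ^ 2 * (∑ i ∈ s, x i * sgR (c i)) ^ 2 + x j ^ 4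
            + sgR (c j) * (4 * x j ^ 3 * (∑ i ∈ s, x i * sgR (c i))
                + 4 * x j * (∑ i ∈ s, x i * sgR (c i)) ^ 3) := by
      intro c
      rw [Finset.sum_insert hj]
      linear_combination (x j ^ 4 * (sgR (c j) ^ 2 + 1) +
        4 * x j ^ 3 * (∑ i ∈ s, x i * sgR (c i)) * sgR (c j) +
        6 * x j ^ 2 * (∑ i ∈ s, x i * sgR (c i)) ^ 2) * sgR_sq (c j)
    simp_rw [key]
    rw [Finset.sum_add_distrib, Finset.sum_add_distrib, Finset.sum_add_distrib,
      Finset.sum_const,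
      sum_sgR_mul_eq_zero j _ (fun c b => by
        have hs : (∑ i ∈ s, x i * sgR (Function.update c j b i))
            = ∑ i ∈ s, x i * sgR (c i) :=
          Finset.sum_congr rfl (fun i hi => by
            rw [Function.update_of_ne (ne_of_mem_of_not_mem hi hj)])
        rw [hs]),
      card_bool_fun]
    have h2 : ∑ c : ι → Bool, 6 * x j ^ 2 * (∑ i ∈ s, x i * sgR (c i)) ^ 2
        = 6 * x j ^ 2 * (2 ^ (Fintype.card ι) * ∑ i ∈ s, x i ^ 2) := by
      rw [← Finset.mul_sum, moment2]
    rw [h2, Finset.sum_insert hj]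
    have hS : (0:ℝ) ≤ ∑ i ∈ s, x i ^ 2 :=
      Finset.sum_nonneg fun i _ => sq_nonneg _
    have hpow : (0:ℝ) < 2 ^ (Fintype.card ι) := by positivity
    simp only [nsmul_eq_mul, add_zero]
    push_cast
    nlinarith [ih, mul_nonneg hpow.le (sq_nonneg (x j ^ 2)), hS, hpow]

/-- Paley–Zygmund style counting: if `S = ∑ xᵢ² > 0`, then at least a `1/12` fraction
of all sign vectors `c` satisfy `(∑ xᵢ sgR (c i))² > S/2`. -/
lemma counting_lemma (x : ι → ℝ) (hS : 0 < ∑ i : ι, x i ^ 2) :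
    (2:ℝ) ^ (Fintype.card ι)
      ≤ 12 * ((Finset.univ : Finset (ι → Bool)).filter
          (fun c => (∑ i : ι, x i ^ 2) / 2 < (∑ i : ι, x i * sgR (c i)) ^ 2)).card := by
  classical
  set S := ∑ i : ι, x i ^ 2 with hSdef
  set Z := fun c : ι → Bool => ∑ i : ι, x i * sgR (c i) with hZdef
  set F := (Finset.univ : Finset (ι → Bool)).filter (fun c => S / 2 < Z c ^ 2) with hFdef
  set m := Fintype.card ι with hm
  have h2 : ∑ c : ι → Bool, Z c ^ 2 = 2 ^ m * S := moment2 x Finset.univ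
  have h4 : ∑ c : ι → Bool, Z c ^ 4 ≤ 3 * 2 ^ m * S ^ 2 := moment4 x Finset.univ
  have hsplit : ∑ c : ι → Bool, Z c ^ 2
      = ∑ c ∈ F, Z c ^ 2 + ∑ c ∈ Finset.univ.filter (fun c => ¬ (S / 2 < Z c ^ 2)), Z c ^ 2 :=
    (Finset.sum_filter_add_sum_filter_not _ _ _).symm
  have hnotF : ∑ c ∈ Finset.univ.filter (fun c => ¬ (S / 2 < Z c ^ 2)), Z c ^ 2
      ≤ 2 ^ m * (S / 2) := by
    calc ∑ c ∈ Finset.univ.filter (fun c => ¬ (S / 2 < Z c ^ 2)), Z c ^ 2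
        ≤ ∑ _c ∈ Finset.univ.filter (fun c => ¬ (S / 2 < Z c ^ 2)), (S / 2) :=
          Finset.sum_le_sum (fun c hc => le_of_not_gt (Finset.mem_filter.mp hc).2)
      _ = (Finset.univ.filter (fun c => ¬ (S / 2 < Z c ^ 2))).card * (S / 2) := by
          rw [Finset.sum_const, nsmul_eq_mul]
      _ ≤ 2 ^ m * (S / 2) := by
          apply mul_le_mul_of_nonneg_right _ (by positivity)
          calc ((Finset.univ.filter (fun c => ¬ (S / 2 < Z c ^ 2))).card : ℝ)
              ≤ ((Finset.univ : Finset (ι → Bool)).card : ℝ) := by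
                exact_mod_cast Finset.card_le_card (Finset.filter_subset _ _)
            _ = 2 ^ m := by rw [card_bool_fun]; push_cast; ring
  have hFsum : 2 ^ m * (S / 2) ≤ ∑ c ∈ F, Z c ^ 2 := by
    have := hsplit ▸ h2
    linarith
  have hCS : (∑ c ∈ F, Z c ^ 2) ^ 2 ≤ (F.card : ℝ) * (3 * 2 ^ m * S ^ 2) := by
    have := Finset.sum_mul_sq_le_sq_mul_sq F (fun _ => (1:ℝ)) (fun c => Z c ^ 2)
    simp only [one_mul, one_pow] at this
    calc (∑ c ∈ F, Z c ^ 2) ^ 2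
        ≤ (∑ _c ∈ F, (1:ℝ)) * ∑ c ∈ F, (Z c ^ 2) ^ 2 := this
      _ = (F.card : ℝ) * ∑ c ∈ F, Z c ^ 4 := by
          rw [Finset.sum_const, nsmul_eq_mul, mul_one]
          congr 1
          exact Finset.sum_congr rfl (fun c _ => by ring)
      _ ≤ (F.card : ℝ) * (3 * 2 ^ m * S ^ 2) := by
          apply mul_le_mul_of_nonneg_left _ (by positivity)
          calc ∑ c ∈ F, Z c ^ 4 ≤ ∑ c : ι → Bool, Z c ^ 4 := by
                apply Finset.sum_le_sum_of_subset_of_nonneg (Finset.filter_subset _ _)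
                intro c _ _
                positivity
            _ ≤ 3 * 2 ^ m * S ^ 2 := h4
  have hpow : (0:ℝ) < 2 ^ m := by positivity
  nlinarith [sq_nonneg S, mul_pos hpow (mul_pos hS hS), hFsum, hCS,
    mul_pos hpow hS]

end SignLemmas


/-- If every point of `A` lies in at least `t` of the (possibly non-measurable) sets `B c`,
then `t * P A ≤ ∑ c, P (B c)`. -/
lemma measure_count {Ω γ : Type*} [MeasurableSpace Ω] [Fintype γ] [DecidableEq γ]
    (P : Measure Ω) (B : γ → Set Ω) (A : Set Ω) (t : ENNReal)
    (hA : ∀ ω ∈ A, t ≤ ∑ c : γ, (B c).indicator (fun _ => (1:ENNReal)) ω) :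
    t * P A ≤ ∑ c : γ, P (B c) := by
  classical
  set B' := fun c => MeasureTheory.toMeasurable P (B c) with hB'
  have hmeas : ∀ c, MeasurableSet (B' c) := fun c => measurableSet_toMeasurable _ _
  set Nf : Ω → ENNReal := fun ω => ∑ c : γ, (B' c).indicator (fun _ => (1:ENNReal)) ω with hNf
  have hNmeas : Measurable Nf := by
    apply Finset.measurable_sum
    intro c _
    exact (measurable_const.indicator (hmeas c))
  have hsub : A ⊆ {ω | t ≤ Nf ω} := by
    intro ω hω
    refine le_trans (hA ω hω) ?_
    apply Finset.sum_le_sum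
    intro c _
    by_cases h : ω ∈ B c
    · rw [Set.indicator_of_mem h, Set.indicator_of_mem (subset_toMeasurable P (B c) h)]
    · rw [Set.indicator_of_notMem h]; exact zero_le
  calc t * P A ≤ t * P {ω | t ≤ Nf ω} := by
        exact mul_le_mul_right (measure_mono hsub) t
    _ ≤ ∫⁻ ω, Nf ω ∂P := mul_meas_ge_le_lintegral₀ hNmeas.aemeasurable t
    _ = ∑ c : γ, P (B' c) := by
        rw [hNf]
        rw [lintegral_finset_sum _ (fun c _ => measurable_const.indicator (hmeas c))]
        exact Finset.sum_congr rfl (fun c _ => lintegral_indicator_one (hmeas c))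
    _ = ∑ c : γ, P (B c) := Finset.sum_congr rfl (fun c _ => measure_toMeasurable _)


section helpers

lemma geom_le' {ρ : ℝ} (h0 : 0 ≤ ρ) (h1 : ρ < 1) (m : ℕ) :
    ∑ n ∈ Finset.range m, ρ ^ n ≤ 1 / (1 - ρ) := by
  have h1' : (0:ℝ) < 1 - ρ := by linarith
  rw [geom_sum_eq (ne_of_lt h1) m]
  have heq : (ρ ^ m - 1) / (ρ - 1) = (1 - ρ ^ m) / (1 - ρ) := by
    rw [show (1 - ρ ^ m) = -(ρ ^ m - 1) by ring, show (1 - ρ) = -(ρ - 1) by ring,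
      neg_div_neg_eq]
  rw [heq]
  have hm : (0:ℝ) ≤ ρ ^ m := pow_nonneg h0 m
  gcongr
  linarith

lemma filter_div_eq_Ico {M q k : ℕ} (hq : 0 < q) (hk : (k + 1) * q ≤ M) :
    (Finset.range M).filter (fun j => j / q = k) = Finset.Ico (k * q) ((k + 1) * q) := by
  ext j
  simp only [Finset.mem_filter, Finset.mem_range, Finset.mem_Ico]
  constructor
  · rintro ⟨hjM, rfl⟩
    refine ⟨Nat.div_mul_le_self j q, ?_⟩
    rw [← Nat.div_lt_iff_lt_mul hq]
    omega
  · rintro ⟨h1, h2⟩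
    have hjM : j < M := lt_of_lt_of_le h2 hk
    refine ⟨hjM, le_antisymm ?_ ?_⟩
    · have := (Nat.div_lt_iff_lt_mul hq).mpr h2
      omega
    · exact (Nat.le_div_iff_mul_le hq).mpr h1

lemma sum_Ico_tel (F : ℕ → ℝ) {m M : ℕ} (h : m ≤ M) :
    ∑ j ∈ Finset.Ico m M, (F (j + 1) - F j) = F M - F m := by
  rw [Finset.sum_Ico_eq_sum_range]
  have hh := Finset.sum_range_sub (fun i => F (m + i)) (M - m)
  calc ∑ i ∈ Finset.range (M - m), (F (m + i + 1) - F (m + i))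
      = F (m + (M - m)) - F (m + 0) := hh
    _ = F M - F m := by rw [Nat.add_sub_cancel' h, Nat.add_zero]

end helpers

lemma step1 {Ω : Type*} [MeasurableSpace Ω] (P : Measure Ω) [IsProbabilityMeasure P]
    (g ν : ℕ → ℕ → Ω → ℝ) (E₀ : Set Ω)
    (hE : ∀ ω ∈ E₀, ∀ N j, j < 2 ^ N → ν N j ω = g N j ω)
    (htel : ∀ N n k, n ≤ N → ∀ ω : Ω,
      g n k ω = ∑ j ∈ Finset.Ico (k * 2 ^ (N - n)) ((k + 1) * 2 ^ (N - n)), g N j ω)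
    (ρ : ℝ) (hρ0 : 0 < ρ) (hρ1 : ρ < 1)
    (C ε' : ℝ) (hC : 0 < C) (hε' : 0 < ε')
    (hb : ∀ (N : ℕ) (e : ℕ → ℝ), (∀ j, |e j| ≤ 1) →
      P {ω | C < |∑ j ∈ Finset.range (2 ^ N), e j * ν N j ω|} ≤ ENNReal.ofReal ε')
    (N : ℕ) :
    P {ω | ω ∈ E₀ ∧ 2 * C ^ 2 * (1 / (1 - ρ)) ^ 2 <
        ∑ n ∈ Finset.range (N + 1), ρ ^ (2 * n) * ∑ k ∈ Finset.range (2 ^ n), g n k ω ^ 2}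
      ≤ ENNReal.ofReal (12 * ε') := by
  have hD0 : (0:ℝ) < 1 / (1 - ρ) := by
    apply div_pos one_pos; linarith
  set D := 1 / (1 - ρ) with hD
  set T : Ω → ℝ := fun ω =>
    ∑ n ∈ Finset.range (N + 1), ρ ^ (2 * n) * ∑ k ∈ Finset.range (2 ^ n), g n k ω ^ 2 with hT
  set y : Ω → ℕ → ℕ → ℝ := fun ω n k => if k < 2 ^ n then ρ ^ n * g n k ω else 0 with hy
  set x : Ω → (Fin (N + 1) × Fin (2 ^ N)) → ℝ := fun ω i => y ω i.1 i.2 with hx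
  have hpow_le : ∀ n, n ≤ N → (2:ℕ) ^ n ≤ 2 ^ N :=
    fun n hn => Nat.pow_le_pow_right (by norm_num) hn
  have hconv : ∀ (f : ℕ → ℕ → ℝ), ∑ i : Fin (N + 1) × Fin (2 ^ N), f i.1 i.2
      = ∑ n ∈ Finset.range (N + 1), ∑ k ∈ Finset.range (2 ^ N), f n k := by
    intro f
    rw [Fintype.sum_prod_type]
    rw [Fin.sum_univ_eq_sum_range (fun n => ∑ k : Fin (2 ^ N), f n k) (N + 1)]
    exact Finset.sum_congr rfl fun n _ => Fin.sum_univ_eq_sum_range (f n) (2 ^ N)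
  have hxsum : ∀ ω, ∑ i : Fin (N + 1) × Fin (2 ^ N), x ω i ^ 2 = T ω := by
    intro ω
    have h1 := hconv (fun n k => y ω n k ^ 2)
    refine Eq.trans h1 ?_
    apply Finset.sum_congr rfl
    intro n hn
    have hn' : n ≤ N := by
      have := Finset.mem_range.mp hn; omega
    rw [← Finset.sum_subset (Finset.range_subset_range.mpr (hpow_le n hn'))
      (fun k _ hk => by
        simp only [hy, Finset.mem_range, not_lt] at hk ⊢
        rw [if_neg (by omega)]
        ring)]
    rw [Finset.mul_sum]
    apply Finset.sum_congr rfl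
    intro k hk
    rw [hy]
    simp only [if_pos (Finset.mem_range.mp hk)]
    rw [mul_pow, ← pow_mul, Nat.mul_comm n 2]
  set Z : ((Fin (N + 1) × Fin (2 ^ N)) → Bool) → Ω → ℝ :=
    fun c ω => ∑ i : Fin (N + 1) × Fin (2 ^ N), x ω i * sgR (c i) with hZ
  set cc : ((Fin (N + 1) × Fin (2 ^ N)) → Bool) → ℕ → ℕ → Bool :=
    fun c n k => if h : n < N + 1 ∧ k < 2 ^ N then c (⟨n, h.1⟩, ⟨k, h.2⟩) else true with hcc
  set d : ((Fin (N + 1) × Fin (2 ^ N)) → Bool) → ℕ → ℝ :=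
    fun c j => ∑ n ∈ Finset.range (N + 1), ρ ^ n * sgR (cc c n (j / 2 ^ (N - n))) with hd
  have hccd : ∀ c (i : Fin (N + 1) × Fin (2 ^ N)), cc c (i.1 : ℕ) (i.2 : ℕ) = c i := by
    intro c i
    rw [hcc]
    simp only [dif_pos (And.intro i.1.isLt i.2.isLt)]
  have hZ1 : ∀ c ω, Z c ω = ∑ n ∈ Finset.range (N + 1), ∑ k ∈ Finset.range (2 ^ N),
      y ω n k * sgR (cc c n k) := by
    intro c ω
    have h1 := hconv (fun n k => y ω n k * sgR (cc c n k))
    refine Eq.trans ?_ h1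
    apply Finset.sum_congr rfl
    intro i _
    rw [hccd]
  have hZ2 : ∀ c ω, ω ∈ E₀ → Z c ω
      = ∑ j ∈ Finset.range (2 ^ N), d c j * ν N j ω := by
    intro c ω hω
    rw [hZ1]
    have hA : ∀ n ∈ Finset.range (N + 1),
        ∑ k ∈ Finset.range (2 ^ N), y ω n k * sgR (cc c n k)
        = ∑ j ∈ Finset.range (2 ^ N),
            (ρ ^ n * sgR (cc c n (j / 2 ^ (N - n)))) * ν N j ω := by
      intro n hn
      have hn' : n ≤ N := by have := Finset.mem_range.mp hn; omega
      have hq : (0:ℕ) < 2 ^ (N - n) := Nat.pow_pos (by norm_num)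
      have hqq : (2:ℕ) ^ (N - n) * 2 ^ n = 2 ^ N := by
        rw [← pow_add]; congr 1; omega
      -- restrict to k < 2^n
      rw [← Finset.sum_subset (Finset.range_subset_range.mpr (hpow_le n hn'))
        (fun k _ hk => by
          simp only [hy, Finset.mem_range, not_lt] at hk ⊢
          rw [if_neg (by omega)]
          ring)]
      -- fiberwise decomposition of the RHS
      rw [← Finset.sum_fiberwise_of_maps_to (g := fun j => j / 2 ^ (N - n))
        (t := Finset.range (2 ^ n))
        (fun j hj => by
          rw [Finset.mem_range] at hj ⊢
          rw [Nat.div_lt_iff_lt_mul hq]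
          calc j < 2 ^ N := hj
            _ = 2 ^ n * 2 ^ (N - n) := by rw [mul_comm]; exact hqq.symm)
        (fun j => (ρ ^ n * sgR (cc c n (j / 2 ^ (N - n)))) * ν N j ω)]
      apply Finset.sum_congr rfl
      intro k hk
      have hk' : k < 2 ^ n := Finset.mem_range.mp hk
      have hkq : (k + 1) * 2 ^ (N - n) ≤ 2 ^ N := by
        calc (k + 1) * 2 ^ (N - n) ≤ 2 ^ n * 2 ^ (N - n) :=
              Nat.mul_le_mul_right _ (by omega)
          _ = 2 ^ N := by rw [mul_comm]; exact hqq
      -- the fiber sum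
      have hfib : (Finset.range (2 ^ N)).filter (fun j => j / 2 ^ (N - n) = k)
          = Finset.Ico (k * 2 ^ (N - n)) ((k + 1) * 2 ^ (N - n)) :=
        filter_div_eq_Ico hq hkq
      calc y ω n k * sgR (cc c n k)
          = (ρ ^ n * sgR (cc c n k)) * g n k ω := by
            rw [hy]; simp only [if_pos hk']; ring
        _ = (ρ ^ n * sgR (cc c n k)) *
              ∑ j ∈ Finset.Ico (k * 2 ^ (N - n)) ((k + 1) * 2 ^ (N - n)), g N j ω := by
            rw [← htel N n k hn' ω]
        _ = ∑ j ∈ Finset.Ico (k * 2 ^ (N - n)) ((k + 1) * 2 ^ (N - n)),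
              (ρ ^ n * sgR (cc c n k)) * ν N j ω := by
            rw [Finset.mul_sum]
            apply Finset.sum_congr rfl
            intro j hj
            have hj' : j < 2 ^ N := by
              have := (Finset.mem_Ico.mp hj).2; omega
            rw [hE ω hω N j hj']
        _ = ∑ j ∈ (Finset.range (2 ^ N)).filter (fun j => j / 2 ^ (N - n) = k),
              (ρ ^ n * sgR (cc c n (j / 2 ^ (N - n)))) * ν N j ω := by
            rw [hfib]
            apply Finset.sum_congr rfl
            intro j hj
            have hdiv : j / 2 ^ (N - n) = k := by
              have : j ∈ (Finset.range (2 ^ N)).filter (fun j => j / 2 ^ (N - n) = k) := by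
                rw [hfib]; exact hj
              exact (Finset.mem_filter.mp this).2
            rw [hdiv]
    rw [Finset.sum_congr rfl hA, Finset.sum_comm]
    apply Finset.sum_congr rfl
    intro j _
    rw [hd, Finset.sum_mul]
  -- coefficient bound
  have hdle : ∀ c j, |d c j| ≤ D := by
    intro c j
    rw [hd]
    calc |∑ n ∈ Finset.range (N + 1), ρ ^ n * sgR (cc c n (j / 2 ^ (N - n)))|
        ≤ ∑ n ∈ Finset.range (N + 1), |ρ ^ n * sgR (cc c n (j / 2 ^ (N - n)))| :=
          Finset.abs_sum_le_sum_abs _ _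
      _ = ∑ n ∈ Finset.range (N + 1), ρ ^ n := by
          apply Finset.sum_congr rfl
          intro n _
          rw [abs_mul, abs_sgR, mul_one, abs_of_pos (pow_pos hρ0 n)]
      _ ≤ D := geom_le' hρ0.le hρ1 _
  -- the bad sets
  set B : ((Fin (N + 1) × Fin (2 ^ N)) → Bool) → Set Ω :=
    fun c => {ω | ω ∈ E₀ ∧ C * D < |Z c ω|} with hB
  have hPB : ∀ c, P (B c) ≤ ENNReal.ofReal ε' := by
    intro c
    refine le_trans (measure_mono ?_) (hb N (fun j => d c j / D) (fun j => by
      rw [abs_div, abs_of_pos hD0, div_le_one hD0]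
      exact hdle c j))
    intro ω hω
    obtain ⟨hω0, hωZ⟩ := hω
    have hsum : ∑ j ∈ Finset.range (2 ^ N), (d c j / D) * ν N j ω
        = (∑ j ∈ Finset.range (2 ^ N), d c j * ν N j ω) / D := by
      rw [Finset.sum_div]
      exact Finset.sum_congr rfl fun j _ => div_mul_eq_mul_div _ _ _
    show C < |∑ j ∈ Finset.range (2 ^ N), (d c j / D) * ν N j ω|
    rw [hsum, ← hZ2 c ω hω0, abs_div, abs_of_pos hD0]
    rw [lt_div_iff₀ hD0]
    exact hωZ
  -- the target event
  set A : Set Ω := {ω | ω ∈ E₀ ∧ 2 * C ^ 2 * D ^ 2 < T ω} with hA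
  have hcount : ∀ ω ∈ A,
      ENNReal.ofReal ((2:ℝ) ^ (Fintype.card (Fin (N + 1) × Fin (2 ^ N))) / 12)
        ≤ ∑ c : (Fin (N + 1) × Fin (2 ^ N)) → Bool,
            (B c).indicator (fun _ => (1:ENNReal)) ω := by
    intro ω hω
    obtain ⟨hω0, hωT⟩ := hω
    have hTpos : 0 < T ω := lt_trans (by positivity) hωT
    have hSpos : 0 < ∑ i : Fin (N + 1) × Fin (2 ^ N), x ω i ^ 2 := by
      rw [hxsum]; exact hTpos
    have hcl := counting_lemma (x ω) hSpos
    have hsub : ∀ c, (∑ i : Fin (N + 1) × Fin (2 ^ N), x ω i ^ 2) / 2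
          < (∑ i : Fin (N + 1) × Fin (2 ^ N), x ω i * sgR (c i)) ^ 2 → ω ∈ B c := by
      intro c hc
      refine ⟨hω0, ?_⟩
      have h1 : (C * D) ^ 2 < (Z c ω) ^ 2 := by
        have h2 : (∑ i : Fin (N + 1) × Fin (2 ^ N), x ω i ^ 2) / 2 > C ^ 2 * D ^ 2 := by
          rw [hxsum]
          linarith
        calc (C * D) ^ 2 = C ^ 2 * D ^ 2 := by ring
          _ < _ := lt_trans h2 hc
      have h3 : (C * D) ^ 2 < |Z c ω| ^ 2 := by rw [sq_abs]; exact h1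
      exact lt_of_pow_lt_pow_left₀ 2 (abs_nonneg _) h3
    have hind : (((Finset.univ : Finset ((Fin (N + 1) × Fin (2 ^ N)) → Bool)).filter
        (fun c => (∑ i : Fin (N + 1) × Fin (2 ^ N), x ω i ^ 2) / 2
          < (∑ i : Fin (N + 1) × Fin (2 ^ N), x ω i * sgR (c i)) ^ 2)).card : ENNReal)
        ≤ ∑ c : (Fin (N + 1) × Fin (2 ^ N)) → Bool,
            (B c).indicator (fun _ => (1:ENNReal)) ω := by
      rw [Finset.card_filter, Nat.cast_sum]
      apply Finset.sum_le_sum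
      intro c _
      by_cases h : (∑ i : Fin (N + 1) × Fin (2 ^ N), x ω i ^ 2) / 2
          < (∑ i : Fin (N + 1) × Fin (2 ^ N), x ω i * sgR (c i)) ^ 2
      · rw [if_pos h, Set.indicator_of_mem (hsub c h)]
        simp
      · rw [if_neg h]; simp
    refine le_trans ?_ hind
    have hcard : ((2:ℝ) ^ (Fintype.card (Fin (N + 1) × Fin (2 ^ N))) / 12)
        ≤ (((Finset.univ : Finset ((Fin (N + 1) × Fin (2 ^ N)) → Bool)).filter
          (fun c => (∑ i : Fin (N + 1) × Fin (2 ^ N), x ω i ^ 2) / 2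
            < (∑ i : Fin (N + 1) × Fin (2 ^ N), x ω i * sgR (c i)) ^ 2)).card : ℝ) := by
      linarith
    calc ENNReal.ofReal ((2:ℝ) ^ (Fintype.card (Fin (N + 1) × Fin (2 ^ N))) / 12)
        ≤ ENNReal.ofReal ((((Finset.univ : Finset ((Fin (N + 1) × Fin (2 ^ N)) → Bool)).filter
            (fun c => (∑ i : Fin (N + 1) × Fin (2 ^ N), x ω i ^ 2) / 2
              < (∑ i : Fin (N + 1) × Fin (2 ^ N), x ω i * sgR (c i)) ^ 2)).card : ℝ)) :=
          ENNReal.ofReal_le_ofReal hcard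
      _ = _ := ENNReal.ofReal_natCast _
  -- put it together
  set m := Fintype.card (Fin (N + 1) × Fin (2 ^ N)) with hm
  have hmc := measure_count P B A (ENNReal.ofReal ((2:ℝ) ^ m / 12)) hcount
  have hsumB : ∑ c : (Fin (N + 1) × Fin (2 ^ N)) → Bool, P (B c)
      ≤ ENNReal.ofReal ((2:ℝ) ^ m * ε') := by
    calc ∑ c : (Fin (N + 1) × Fin (2 ^ N)) → Bool, P (B c)
        ≤ ∑ _c : (Fin (N + 1) × Fin (2 ^ N)) → Bool, ENNReal.ofReal ε' :=
          Finset.sum_le_sum fun c _ => hPB c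
      _ = ((Finset.univ : Finset ((Fin (N + 1) × Fin (2 ^ N)) → Bool)).card : ENNReal)
            * ENNReal.ofReal ε' := by
          rw [Finset.sum_const, nsmul_eq_mul]
      _ = ENNReal.ofReal ((2:ℝ) ^ m) * ENNReal.ofReal ε' := by
          rw [card_bool_fun]
          congr 1
          rw [show ((2:ℝ) ^ m) = ((2 ^ m : ℕ) : ℝ) by push_cast; ring,
            ENNReal.ofReal_natCast]
      _ = ENNReal.ofReal ((2:ℝ) ^ m * ε') := by
          rw [ENNReal.ofReal_mul (by positivity)]
  have ht0 : ENNReal.ofReal ((2:ℝ) ^ m / 12) ≠ 0 := by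
    rw [← ENNReal.ofReal_zero, Ne, ENNReal.ofReal_eq_ofReal_iff (by positivity) le_rfl]
    positivity
  have httop : ENNReal.ofReal ((2:ℝ) ^ m / 12) ≠ ⊤ := ENNReal.ofReal_ne_top
  have hfin : ENNReal.ofReal ((2:ℝ) ^ m / 12) * P A
      ≤ ENNReal.ofReal ((2:ℝ) ^ m / 12) * ENNReal.ofReal (12 * ε') := by
    refine le_trans (le_trans hmc hsumB) (le_of_eq ?_)
    rw [← ENNReal.ofReal_mul (by positivity)]
    congr 1
    field_simp
  have := (ENNReal.mul_le_mul_iff_right ht0 httop).mp hfin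
  exact this

/-- **Besov regularity of stochastic measures, dyadic sum convergence.**
Let `μ` be defined on Borel subsets of `[a, b]` with the family of finite sums
`∑ c_k μ(A_k)` (pairwise disjoint measurable `A_k ⊆ [a,b]`, `|c_k| ≤ 1`) bounded in
probability.  Suppose the process `t ↦ μ([a, t])` has continuous paths a.s. and
`μ((s, t]) = μ([a,t]) − μ([a,s])` a.s. for `a ≤ s ≤ t ≤ b`.  Then for `p ≥ 2` and
`0 < α < 1/p`, almost surely
`∑_n 2^{n(αp−1)} ∑_{k=1}^{2^n} |μ(a + k 2⁻ⁿ(b−a)) − μ(a + (k−1) 2⁻ⁿ(b−a))|^p < ∞`. -/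
theorem stochastic_measure_dyadic_sum_summable
    {Ω : Type*} [MeasurableSpace Ω] (P : Measure Ω) [IsProbabilityMeasure P]
    (a b : ℝ) (hab : a < b)
    (μ : Set ℝ → Ω → ℝ)
    (hbdd : ∀ ε : ℝ, 0 < ε → ∃ C : ℝ, 0 < C ∧
      ∀ (n : ℕ) (A : Fin n → Set ℝ) (c : Fin n → ℝ),
        (∀ k, MeasurableSet (A k)) →
        (∀ k, A k ⊆ Set.Icc a b) →
        (Pairwise (Function.onFun Disjoint A)) →
        (∀ k, |c k| ≤ 1) →
        P {ω | C < |∑ k, c k * μ (A k) ω|} < ENNReal.ofReal ε)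
    (hcont : ∀ᵐ ω ∂P, ContinuousOn (fun t => μ (Set.Icc a t) ω) (Set.Icc a b))
    (hadd : ∀ s t : ℝ, a ≤ s → s ≤ t → t ≤ b →
      ∀ᵐ ω ∂P, μ (Set.Ioc s t) ω = μ (Set.Icc a t) ω - μ (Set.Icc a s) ω)
    (p α : ℝ) (hp : 2 ≤ p) (hα0 : 0 < α) (hα1 : α < 1 / p) :
    ∀ᵐ ω ∂P, Summable (fun n : ℕ =>
      (2 : ℝ) ^ ((n : ℝ) * (α * p - 1)) *
        ∑ k ∈ Finset.range (2 ^ n),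
          |μ (Set.Icc a (a + ((k : ℝ) + 1) * (b - a) / 2 ^ n)) ω -
            μ (Set.Icc a (a + (k : ℝ) * (b - a) / 2 ^ n)) ω| ^ p) := by
  have hba : (0:ℝ) < b - a := by linarith
  have hp0 : (0:ℝ) < p := by linarith
  have hαp1 : α * p < 1 := by
    have := (mul_lt_mul_of_pos_right hα1 hp0)
    rwa [one_div, inv_mul_cancel₀ (ne_of_gt hp0)] at this
  set f : ℝ → Ω → ℝ := fun t ω => μ (Set.Icc a t) ω with hf
  set τ : ℕ → ℕ → ℝ := fun n j => a + (j:ℝ) * (b - a) / 2 ^ n with hτ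
  set g : ℕ → ℕ → Ω → ℝ := fun n k ω => f (τ n (k + 1)) ω - f (τ n k) ω with hg
  set ν : ℕ → ℕ → Ω → ℝ := fun n j ω => μ (Set.Ioc (τ n j) (τ n (j + 1))) ω with hν
  -- grid facts
  have hτa : ∀ n j, a ≤ τ n j := by
    intro n j
    rw [hτ]
    have : (0:ℝ) ≤ (j:ℝ) * (b - a) / 2 ^ n := by positivity
    linarith
  have hτmono : ∀ n j j', j ≤ j' → τ n j ≤ τ n j' := by
    intro n j j' h
    rw [hτ]
    have hjj : (j:ℝ) ≤ (j':ℝ) := by exact_mod_cast h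
    have : (j:ℝ) * (b - a) / 2 ^ n ≤ (j':ℝ) * (b - a) / 2 ^ n := by gcongr
    simpa using this
  have hτb : ∀ n j, j ≤ 2 ^ n → τ n j ≤ b := by
    intro n j hj
    rw [hτ]
    have hjj : (j:ℝ) ≤ (2:ℝ) ^ n := by exact_mod_cast hj
    have h1 : (j:ℝ) * (b - a) / 2 ^ n ≤ (2:ℝ) ^ n * (b - a) / 2 ^ n := by gcongr
    have h2 : (2:ℝ) ^ n * (b - a) / 2 ^ n = b - a := by
      field_simp
    linarith
  have hτshift : ∀ N n k, n ≤ N → τ n k = τ N (k * 2 ^ (N - n)) := by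
    intro N n k hn
    rw [hτ]
    have h2 : (2:ℝ) ^ (N - n) * 2 ^ n = 2 ^ N := by
      rw [← pow_add]; congr 1; omega
    have h3 : ((k * 2 ^ (N - n) : ℕ) : ℝ) = (k:ℝ) * 2 ^ (N - n) := by push_cast; ring
    have h4 : (k:ℝ) * (b - a) / 2 ^ n
        = ((k * 2 ^ (N - n) : ℕ) : ℝ) * (b - a) / 2 ^ N := by
      rw [h3, div_eq_div_iff (by positivity) (by positivity), ← h2]
      ring
    show a + (k:ℝ) * (b - a) / 2 ^ n = a + ((k * 2 ^ (N - n) : ℕ) : ℝ) * (b - a) / 2 ^ N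
    rw [h4]
  have htel : ∀ N n k, n ≤ N → ∀ ω : Ω,
      g n k ω = ∑ j ∈ Finset.Ico (k * 2 ^ (N - n)) ((k + 1) * 2 ^ (N - n)), g N j ω := by
    intro N n k hn ω
    have h1 : ∑ j ∈ Finset.Ico (k * 2 ^ (N - n)) ((k + 1) * 2 ^ (N - n)),
        (f (τ N (j + 1)) ω - f (τ N j) ω)
        = f (τ N ((k + 1) * 2 ^ (N - n))) ω - f (τ N (k * 2 ^ (N - n))) ω :=
      sum_Ico_tel (fun j => f (τ N j) ω)
        (Nat.mul_le_mul_right _ (Nat.le_succ k))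
    rw [hg]
    calc f (τ n (k + 1)) ω - f (τ n k) ω
        = f (τ N ((k + 1) * 2 ^ (N - n))) ω - f (τ N (k * 2 ^ (N - n))) ω := by
          rw [hτshift N n (k + 1) hn, hτshift N n k hn]
      _ = _ := h1.symm
  -- the good event
  set E₀ : Set Ω := {ω | ContinuousOn (fun t => f t ω) (Set.Icc a b)
    ∧ ∀ N j, j < 2 ^ N → ν N j ω = g N j ω} with hE₀
  have hE₀ae : ∀ᵐ ω ∂P, ω ∈ E₀ := by
    have h1 : ∀ᵐ ω ∂P, ∀ N j : ℕ, j < 2 ^ N → ν N j ω = g N j ω := by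
      rw [MeasureTheory.ae_all_iff]
      intro N
      rw [MeasureTheory.ae_all_iff]
      intro j
      by_cases hj : j < 2 ^ N
      · have := hadd (τ N j) (τ N (j + 1)) (hτa N j)
          (hτmono N j (j + 1) (Nat.le_succ j)) (hτb N (j + 1) hj)
        filter_upwards [this] with ω h
        intro _
        exact h
      · exact Filter.Eventually.of_forall (fun ω h => absurd h hj)
    filter_upwards [hcont, h1] with ω h2 h3
    exact ⟨h2, h3⟩
  have hE : ∀ ω ∈ E₀, ∀ N j, j < 2 ^ N → ν N j ω = g N j ω := fun ω hω => hω.2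
  -- the geometric parameter
  set ρ : ℝ := (2:ℝ) ^ ((α * p - 1) / 2) with hρ
  have hρ0 : 0 < ρ := Real.rpow_pos_of_pos (by norm_num) _
  have hρ1 : ρ < 1 :=
    Real.rpow_lt_one_of_one_lt_of_neg (by norm_num) (by linarith)
  have hρ2 : ∀ n : ℕ, (2:ℝ) ^ ((n:ℝ) * (α * p - 1)) = ρ ^ (2 * n) := by
    intro n
    rw [hρ, ← Real.rpow_natCast ((2:ℝ) ^ ((α * p - 1) / 2)) (2 * n),
      ← Real.rpow_mul (by norm_num : (0:ℝ) ≤ 2)]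
    congr 1
    push_cast
    ring
  -- abbreviation for partial sums
  set T : ℕ → Ω → ℝ := fun N ω =>
    ∑ n ∈ Finset.range (N + 1), ρ ^ (2 * n) * ∑ k ∈ Finset.range (2 ^ n), g n k ω ^ 2 with hT
  have hTmono : ∀ ω, Monotone (fun N => T N ω) := by
    intro ω N N' h
    apply Finset.sum_le_sum_of_subset_of_nonneg
    · exact Finset.range_subset_range.mpr (by omega)
    · intro n _ _
      positivity
  -- uniform-in-N probability estimate
  have hstep : ∀ ε : ℝ, 0 < ε → ∃ K : ℝ, 0 < K ∧
      ∀ N, P {ω | ω ∈ E₀ ∧ K < T N ω} ≤ ENNReal.ofReal ε := by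
    intro ε hε
    obtain ⟨C, hC, hCb⟩ := hbdd (ε / 12) (by linarith)
    have h1ρ : (0:ℝ) < 1 - ρ := by linarith
    refine ⟨2 * C ^ 2 * (1 / (1 - ρ)) ^ 2, by positivity, ?_⟩
    intro N
    have hbN : ∀ (N : ℕ) (e : ℕ → ℝ), (∀ j, |e j| ≤ 1) →
        P {ω | C < |∑ j ∈ Finset.range (2 ^ N), e j * ν N j ω|} ≤ ENNReal.ofReal (ε / 12) := by
      intro N e he
      have hsum : ∀ ω : Ω, (∑ k : Fin (2 ^ N), e (k:ℕ) *
            μ (Set.Ioc (τ N (k:ℕ)) (τ N ((k:ℕ) + 1))) ω)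
          = ∑ j ∈ Finset.range (2 ^ N), e j * ν N j ω := fun ω =>
        Fin.sum_univ_eq_sum_range
          (fun j => e j * μ (Set.Ioc (τ N j) (τ N (j + 1))) ω) (2 ^ N)
      have hset : {ω | C < |∑ k : Fin (2 ^ N), e (k:ℕ) *
            μ (Set.Ioc (τ N (k:ℕ)) (τ N ((k:ℕ) + 1))) ω|}
          = {ω | C < |∑ j ∈ Finset.range (2 ^ N), e j * ν N j ω|} :=
        Set.ext fun ω => by rw [Set.mem_setOf_eq, Set.mem_setOf_eq, hsum ω]
      rw [← hset]
      apply le_of_lt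
      apply hCb (2 ^ N) (fun k : Fin (2 ^ N) => Set.Ioc (τ N (k:ℕ)) (τ N ((k:ℕ) + 1)))
        (fun k : Fin (2 ^ N) => e (k:ℕ))
      · intro k
        exact measurableSet_Ioc
      · intro k
        intro x hx
        exact ⟨le_trans (hτa N (k:ℕ)) hx.1.le,
          le_trans hx.2 (hτb N ((k:ℕ) + 1) k.isLt)⟩
      · intro j j' hne
        have hdisj : ∀ i i' : Fin (2 ^ N), (i:ℕ) < (i':ℕ) →
            Disjoint (Set.Ioc (τ N (i:ℕ)) (τ N ((i:ℕ) + 1)))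
              (Set.Ioc (τ N (i':ℕ)) (τ N ((i':ℕ) + 1))) := by
          intro i i' hii
          rw [Set.Ioc_disjoint_Ioc]
          exact le_trans (min_le_left _ _)
            (le_trans (hτmono N ((i:ℕ) + 1) (i':ℕ) hii) (le_max_right _ _))
        rcases lt_or_gt_of_ne (fun h => hne (Fin.ext h) : (j:ℕ) ≠ (j':ℕ)) with h | h
        · exact hdisj j j' h
        · exact (hdisj j' j h).symm
      · intro k
        exact he (k:ℕ)
    have := step1 P g ν E₀ hE htel ρ hρ0 hρ1 C (ε / 12) hC (by linarith) hbN N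
    rw [show 12 * (ε / 12) = ε by ring] at this
    exact this
  -- the exceptional set
  set Bad : Set Ω := {ω | ω ∈ E₀ ∧ ¬ ∃ K : ℝ, ∀ N, T N ω ≤ K} with hBad
  have hbad : P Bad = 0 := by
    have key : ∀ ε : ℝ, 0 < ε → P Bad ≤ ENNReal.ofReal ε := by
      intro ε hε
      obtain ⟨K, hK, hKP⟩ := hstep ε hε
      set A : ℕ → Set Ω := fun N => {ω | ω ∈ E₀ ∧ K < T N ω} with hA
      have hAmono : Monotone A := by
        intro N N' h ω hω
        exact ⟨hω.1, lt_of_lt_of_le hω.2 (hTmono ω h)⟩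
      have hsub : Bad ⊆ ⋃ N, A N := by
        intro ω hω
        obtain ⟨hω0, hωK⟩ := hω
        push_neg at hωK
        obtain ⟨N, hN⟩ := hωK K
        exact Set.mem_iUnion.mpr ⟨N, hω0, hN⟩
      calc P Bad ≤ P (⋃ N, A N) := measure_mono hsub
        _ = ⨆ N, P (A N) := hAmono.measure_iUnion
        _ ≤ ENNReal.ofReal ε := iSup_le hKP
    by_contra hne
    have hfin : P Bad ≠ ⊤ := measure_ne_top P _
    have h1 : 0 < (P Bad).toReal := ENNReal.toReal_pos hne hfin
    have h2 : ENNReal.ofReal ((P Bad).toReal / 2) < P Bad := by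
      rw [ENNReal.ofReal_lt_iff_lt_toReal (by linarith) hfin]
      linarith
    exact absurd (lt_of_le_of_lt (key _ (by linarith)) h2) (lt_irrefl _)
  -- conclusion
  filter_upwards [hE₀ae, (MeasureTheory.measure_eq_zero_iff_ae_notMem.mp hbad)] with ω hω0 hωB
  have hKex : ∃ K : ℝ, ∀ N, T N ω ≤ K := by
    by_contra h
    exact hωB ⟨hω0, h⟩
  obtain ⟨K, hK⟩ := hKex
  obtain ⟨M, hM⟩ := (isCompact_Icc : IsCompact (Set.Icc a b)).exists_bound_of_continuousOn hω0.1
  have hM0 : 0 ≤ M := le_trans (norm_nonneg _) (hM a (Set.left_mem_Icc.mpr hab.le))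
  set Q : ℝ := (2 * M + 1) ^ (p - 2) with hQ
  have hQ0 : 0 ≤ Q := Real.rpow_nonneg (by linarith) _
  have hg_le : ∀ n k : ℕ, k < 2 ^ n → |g n k ω| ≤ 2 * M + 1 := by
    intro n k hk
    have h1 : τ n (k + 1) ∈ Set.Icc a b := ⟨hτa n (k + 1), hτb n (k + 1) hk⟩
    have h2 : τ n k ∈ Set.Icc a b := ⟨hτa n k, hτb n k (le_of_lt hk)⟩
    rw [hg]
    calc |f (τ n (k + 1)) ω - f (τ n k) ω| ≤ |f (τ n (k + 1)) ω| + |f (τ n k) ω| :=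
          abs_sub _ _
      _ ≤ 2 * M + 1 := by
        have ha1 := hM _ h1
        have ha2 := hM _ h2
        rw [Real.norm_eq_abs] at ha1 ha2
        linarith
  have hrpow : ∀ z : ℝ, |z| ≤ 2 * M + 1 → |z| ^ p ≤ Q * z ^ 2 := by
    intro z hz
    by_cases h0 : z = 0
    · subst h0
      rw [abs_zero, Real.zero_rpow (by linarith : p ≠ 0)]
      positivity
    · have habs : 0 < |z| := abs_pos.mpr h0
      calc |z| ^ p = |z| ^ (p - 2) * |z| ^ (2:ℝ) := by
            rw [← Real.rpow_add habs]; ring_nf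
        _ ≤ Q * |z| ^ (2:ℝ) := by
            apply mul_le_mul_of_nonneg_right
            · exact Real.rpow_le_rpow (abs_nonneg z) hz (by linarith)
            · exact Real.rpow_nonneg (abs_nonneg z) _
        _ = Q * z ^ 2 := by
            rw [show (2:ℝ) = ((2:ℕ):ℝ) by norm_num, Real.rpow_natCast, sq_abs]
  have hv : Summable (fun n : ℕ => ρ ^ (2 * n) * ∑ k ∈ Finset.range (2 ^ n), g n k ω ^ 2) := by
    apply summable_of_sum_range_le (c := K)
    · intro n
      positivity
    · intro m
      calc ∑ n ∈ Finset.range m, ρ ^ (2 * n) * ∑ k ∈ Finset.range (2 ^ n), g n k ω ^ 2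
          ≤ T m ω := by
            apply Finset.sum_le_sum_of_subset_of_nonneg
            · exact Finset.range_subset_range.mpr (by omega)
            · intro n _ _
              positivity
        _ ≤ K := hK m
  refine Summable.of_nonneg_of_le ?_ ?_ (hv.mul_left Q)
  · intro n
    have : (0:ℝ) ≤ ∑ k ∈ Finset.range (2 ^ n),
        |μ (Set.Icc a (a + ((k : ℝ) + 1) * (b - a) / 2 ^ n)) ω -
          μ (Set.Icc a (a + (k : ℝ) * (b - a) / 2 ^ n)) ω| ^ p := by
      apply Finset.sum_nonneg
      intro k _
      positivity
    positivity
  · intro n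
    have hsummand : ∀ k ∈ Finset.range (2 ^ n),
        |μ (Set.Icc a (a + ((k : ℝ) + 1) * (b - a) / 2 ^ n)) ω -
            μ (Set.Icc a (a + (k : ℝ) * (b - a) / 2 ^ n)) ω| ^ p
          = |g n k ω| ^ p := by
      intro k hk
      have e1 : a + ((k : ℝ) + 1) * (b - a) / 2 ^ n = τ n (k + 1) := by
        rw [hτ]; push_cast; ring
      have e2 : a + (k : ℝ) * (b - a) / 2 ^ n = τ n k := by
        rw [hτ]
      rw [e1, e2]
    rw [Finset.sum_congr rfl hsummand, hρ2 n]
    have hsum_le : ∑ k ∈ Finset.range (2 ^ n), |g n k ω| ^ p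
        ≤ Q * ∑ k ∈ Finset.range (2 ^ n), g n k ω ^ 2 := by
      rw [Finset.mul_sum]
      apply Finset.sum_le_sum
      intro k hk
      exact hrpow _ (hg_le n k (Finset.mem_range.mp hk))
    calc ρ ^ (2 * n) * ∑ k ∈ Finset.range (2 ^ n), |g n k ω| ^ p
        ≤ ρ ^ (2 * n) * (Q * ∑ k ∈ Finset.range (2 ^ n), g n k ω ^ 2) := by
          apply mul_le_mul_of_nonneg_left hsum_le
          positivity
      _ = Q * (ρ ^ (2 * n) * ∑ k ∈ Finset.range (2 ^ n), g n k ω ^ 2) := by ring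

end StochasticMeasureAux
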